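/- If M ∈ SL(2,ℝ) is a product M = R(αₙ)Aₙ ⋯ R(α₁)A₁ of rotations R(αᵢ) with 0 < αᵢ < π and shears Aᵢ = [[1,sᵢ],[0,1]] with sᵢ > 0, and Σαᵢ ≤ 2π with n ≥ 2, then M does not fix the ray spanned by (1,0)ᵀ; in particular M ≠ Id. -/

import Mathlib

open Real Matrix

/-- Rotation matrix by angle `θ`. -/
noncomputable def rotMat (θ : ℝ) : Matrix (Fin 2) (Fin 2) ℝ :=
  !![Real.cos θ, -Real.sin θ; Real.sin θ, Real.cos θ]

/-- Shear matrix with parameter `s`. -/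
def shearMat (s : ℝ) : Matrix (Fin 2) (Fin 2) ℝ := !![1, s; 0, 1]

lemma im_of_rep {z : ℂ} {θ : ℝ}
    (h : z = (‖z‖ : ℝ) * Complex.exp (θ * Complex.I)) :
    z.im = ‖z‖ * Real.sin θ := by
  conv_lhs => rw [h]
  simp [Complex.mul_im, Complex.exp_ofReal_mul_I_re, Complex.exp_ofReal_mul_I_im]

lemma shear_step (z : ℂ) (θ t : ℝ) (hz : z ≠ 0)
    (hzθ : z = (‖z‖ : ℝ) * Complex.exp (θ * Complex.I))
    (hθ0 : 0 < θ) (hθ2 : θ ≤ 2 * Real.pi) (ht : 0 < t) :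
    ∃ θ' : ℝ, z + ((t * z.im : ℝ) : ℂ) ≠ 0 ∧
      z + ((t * z.im : ℝ) : ℂ)
        = (‖z + ((t * z.im : ℝ) : ℂ)‖ : ℝ) * Complex.exp (θ' * Complex.I) ∧
      0 < θ' ∧ θ' ≤ θ ∧ (z.im ≠ 0 → θ' < θ) := by
  set w : ℂ := z + ((t * z.im : ℝ) : ℂ) with hw_def
  have him : w.im = z.im := by simp [hw_def]
  have hre : w.re = z.re + t * z.im := by simp [hw_def]
  by_cases hy : z.im = 0
  · have hwz : w = z := by
      rw [hw_def, hy]; simp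
    rw [hwz]
    exact ⟨θ, hz, hzθ, hθ0, le_rfl, fun h => absurd hy h⟩
  · have hw : w ≠ 0 := by
      intro h
      apply hy
      rw [← him, h]; simp
    set u : ℂ := w / z with hu_def
    have hnsq : 0 < Complex.normSq z := Complex.normSq_pos.mpr hz
    have huim : u.im < 0 := by
      rw [hu_def, Complex.div_im, him, hre, div_sub_div_same]
      have hnum : z.im * z.re - (z.re + t * z.im) * z.im = -(t * z.im ^ 2) := by ring
      rw [hnum]
      apply div_neg_of_neg_of_pos _ hnsq
      have : 0 < t * z.im ^ 2 := mul_pos ht (by positivity)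
      linarith
    set a : ℝ := Complex.arg u with ha_def
    have ha0 : a < 0 := Complex.arg_neg_iff.mpr huim
    have hapi : -Real.pi < a := Complex.neg_pi_lt_arg u
    have habs : ‖u‖ * ‖z‖ = ‖w‖ := by
      rw [hu_def, norm_div, div_mul_cancel₀]
      exact norm_ne_zero_iff.mpr hz
    have h1 : (‖u‖ : ℂ) * Complex.exp (a * Complex.I) = u :=
      Complex.norm_mul_exp_arg_mul_I u
    have h2 : w = u * z := (div_mul_cancel₀ w hz).symm
    have hrep : w = (‖w‖ : ℝ) * Complex.exp (((θ + a : ℝ) : ℂ) * Complex.I) := by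
      calc w = u * z := h2
        _ = ((‖u‖ : ℂ) * Complex.exp (a * Complex.I)) *
              ((‖z‖ : ℂ) * Complex.exp (θ * Complex.I)) := by rw [h1, ← hzθ]
        _ = ((‖u‖ * ‖z‖ : ℝ) : ℂ) *
              Complex.exp (((θ + a : ℝ) : ℂ) * Complex.I) := by
            push_cast [Complex.exp_add, add_mul]; ring
        _ = (‖w‖ : ℝ) * Complex.exp (((θ + a : ℝ) : ℂ) * Complex.I) := by rw [habs]
    refine ⟨θ + a, hw, hrep, ?_, by linarith, fun _ => by linarith⟩
    rcases le_or_gt θ Real.pi with hθpi | hθpi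
    · -- θ ≤ π : here z.im > 0, so sin (θ + a) > 0, forcing θ + a > 0
      have hzim : z.im = ‖z‖ * Real.sin θ := im_of_rep hzθ
      have hsin : 0 < Real.sin θ := by
        have h := Real.sin_nonneg_of_nonneg_of_le_pi hθ0.le hθpi
        rcases h.lt_or_eq with h | h
        · exact h
        · exfalso; apply hy; rw [hzim, ← h, mul_zero]
      have hzim' : 0 < z.im := by
        rw [hzim]; exact mul_pos (norm_pos_iff.mpr hz) hsin
      have hwim : w.im = ‖w‖ * Real.sin (θ + a) := im_of_rep hrep
      have hwim' : 0 < w.im := him ▸ hzim'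
      have hsin' : 0 < Real.sin (θ + a) := by
        rw [hwim] at hwim'
        by_contra hcon
        push_neg at hcon
        nlinarith [norm_nonneg w]
      by_contra hcon
      push_neg at hcon
      have : Real.sin (θ + a) ≤ 0 :=
        Real.sin_nonpos_of_nonpos_of_neg_pi_le hcon (by linarith)
      linarith
    · linarith

/-- The complex sequence tracking the image of `(1,0)` under the partial products. -/
noncomputable def wSeq (A S : ℕ → ℝ) : ℕ → ℂ
  | 0 => 1
  | (k+1) => Complex.exp (A k * Complex.I) *
      (wSeq A S k + ((S k * (wSeq A S k).im : ℝ) : ℂ))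

lemma prod_ofFn_reverse_succ (g : ℕ → Matrix (Fin 2) (Fin 2) ℝ) (k : ℕ) :
    (List.ofFn (fun i : Fin (k+1) => g i)).reverse.prod
      = g k * (List.ofFn (fun i : Fin k => g i)).reverse.prod := by
  rw [List.ofFn_succ']
  simp

lemma mulVec_eq_w (A S : ℕ → ℝ) (k : ℕ) :
    ((List.ofFn (fun i : Fin k => rotMat (A i) * shearMat (S i))).reverse.prod).mulVec ![1,0]
      = ![(wSeq A S k).re, (wSeq A S k).im] := by
  induction k with
  | zero =>
      funext j
      fin_cases j <;> simp [wSeq, Matrix.one_mulVec]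
  | succ k ih =>
      rw [prod_ofFn_reverse_succ (fun i => rotMat (A i) * shearMat (S i)) k,
        ← Matrix.mulVec_mulVec, ih]
      funext j
      fin_cases j <;>
        simp [wSeq, rotMat, shearMat, Matrix.mulVec, Matrix.mul_apply, dotProduct,
          Fin.sum_univ_two, Complex.mul_re, Complex.mul_im,
          Complex.exp_ofReal_mul_I_re, Complex.exp_ofReal_mul_I_im] <;>
        ring

/-- If `M = R(αₙ)Aₙ ⋯ R(α₁)A₁` with `0 < αᵢ < π`, `sᵢ > 0`, `n ≥ 2` and `∑ αᵢ ≤ 2π`,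
then `M` does not fix the ray spanned by `(1,0)ᵀ`; in particular `M ≠ Id`. -/
theorem shear_rotation_product_not_fix_ray {n : ℕ} (hn : 2 ≤ n) (α s : Fin n → ℝ)
    (hα : ∀ i, 0 < α i ∧ α i < Real.pi) (hs : ∀ i, 0 < s i)
    (M : Matrix (Fin 2) (Fin 2) ℝ)
    (hM : M = (List.ofFn (fun i : Fin n => rotMat (α i) * shearMat (s i))).reverse.prod)
    (hsum : ∑ i, α i ≤ 2 * Real.pi) :
    (¬ ∃ t : ℝ, 0 < t ∧ M.mulVec ![1, 0] = t • ![1, 0]) ∧ M ≠ 1 := by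
  classical
  set A : ℕ → ℝ := fun i => if h : i < n then α ⟨i, h⟩ else 1 with hA_def
  set S : ℕ → ℝ := fun i => if h : i < n then s ⟨i, h⟩ else 1 with hS_def
  have hAeq : ∀ i : Fin n, A i = α i := by
    intro i; simp [hA_def, i.isLt]
  have hSeq : ∀ i : Fin n, S i = s i := by
    intro i; simp [hS_def, i.isLt]
  have hApos : ∀ i, i < n → 0 < A i := by
    intro i hi
    have := (hα ⟨i, hi⟩).1
    simpa [hA_def, hi] using this
  have hApi : ∀ i, i < n → A i < Real.pi := by
    intro i hi
    have := (hα ⟨i, hi⟩).2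
    simpa [hA_def, hi] using this
  have hSpos : ∀ i, i < n → 0 < S i := by
    intro i hi
    have := hs ⟨i, hi⟩
    simpa [hS_def, hi] using this
  set B : ℕ → ℝ := fun k => ∑ i ∈ Finset.range k, A i with hB_def
  have hBn : B n = ∑ i, α i := by
    simp only [hB_def]
    rw [← Fin.sum_univ_eq_sum_range (fun i => A i) n]
    exact Finset.sum_congr rfl fun i _ => hAeq i
  have hBmono : ∀ k, k ≤ n → B k ≤ B n := by
    intro k hk
    simp only [hB_def]
    apply Finset.sum_le_sum_of_subset_of_nonneg
    · exact Finset.range_subset_range.mpr hk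
    · intro i hi _
      exact (hApos i (Finset.mem_range.mp hi)).le
  have hB2pi : ∀ k, k ≤ n → B k ≤ 2 * Real.pi := by
    intro k hk
    calc B k ≤ B n := hBmono k hk
      _ = ∑ i, α i := hBn
      _ ≤ 2 * Real.pi := hsum
  -- main induction
  have key : ∀ k, 1 ≤ k → k ≤ n →
      ∃ θ : ℝ, wSeq A S k ≠ 0 ∧
        wSeq A S k = (‖wSeq A S k‖ : ℝ) * Complex.exp (θ * Complex.I) ∧
        0 < θ ∧ θ ≤ B k ∧ (2 ≤ k → θ < B k) := by
    intro k
    induction k with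
    | zero => omega
    | succ k ih =>
      intro _ hkn
      rcases Nat.eq_zero_or_pos k with hk0 | hk1
      · subst hk0
        have h0n : (0 : ℕ) < n := by omega
        refine ⟨A 0, ?_, ?_, hApos 0 h0n, ?_, by omega⟩
        · simp [wSeq, Complex.exp_ne_zero]
        · simp [wSeq, _root_.map_mul, Complex.norm_exp_ofReal_mul_I]
        · simp [hB_def]
      · have hkn' : k ≤ n := by omega
        have hklt : k < n := by omega
        obtain ⟨θ, hzne, hrep, hθ0, hθle, hθlt⟩ := ih hk1 hkn'
        have hθ2 : θ ≤ 2 * Real.pi := le_trans hθle (hB2pi k hkn')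
        obtain ⟨θ', hwne, hwrep, hθ'0, hθ'le, hθ'lt⟩ :=
          shear_step (wSeq A S k) θ (S k) hzne hrep hθ0 hθ2 (hSpos k hklt)
        set w' : ℂ := wSeq A S k + ((S k * (wSeq A S k).im : ℝ) : ℂ) with hw'_def
        have hwk1 : wSeq A S (k+1) = Complex.exp (A k * Complex.I) * w' := rfl
        have habs : ‖wSeq A S (k+1)‖ = ‖w'‖ := by
          rw [hwk1, norm_mul, Complex.norm_exp_ofReal_mul_I, one_mul]
        refine ⟨θ' + A k, ?_, ?_, ?_, ?_, ?_⟩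
        · rw [hwk1]
          exact mul_ne_zero (Complex.exp_ne_zero _) hwne
        · rw [habs, hwk1]
          conv_lhs => rw [hwrep]
          push_cast [Complex.exp_add, add_mul]
          ring
        · have := hApos k hklt; linarith
        · have hBsucc : B (k+1) = B k + A k := Finset.sum_range_succ A k
          rw [hBsucc]; linarith
        · intro _
          have hBsucc : B (k+1) = B k + A k := Finset.sum_range_succ A k
          rcases Nat.lt_or_ge k 2 with hk2 | hk2
          · -- k = 1 : angle θ ∈ (0, A 0] ⊆ (0, π), so im ≠ 0, strict decrease
            have hk1' : k = 1 := by omega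
            subst hk1'
            have hB1 : B 1 = A 0 := by simp [hB_def]
            have hθpi : θ < Real.pi := by
              have := hApi 0 (by omega)
              rw [hB1] at hθle
              linarith
            have hsin : 0 < Real.sin θ := Real.sin_pos_of_pos_of_lt_pi hθ0 hθpi
            have him : (wSeq A S 1).im = ‖wSeq A S 1‖ * Real.sin θ :=
              im_of_rep hrep
            have himpos : 0 < (wSeq A S 1).im := by
              rw [him]; exact mul_pos (norm_pos_iff.mpr hzne) hsin
            have := hθ'lt himpos.ne'
            rw [hBsucc]; linarith
          · have := hθlt hk2
            rw [hBsucc]; linarith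
  -- conclusion
  have h2n : 1 ≤ n := by omega
  obtain ⟨θ, hzne, hrep, hθ0, hθle, hθlt⟩ := key n h2n le_rfl
  have hθltB : θ < B n := hθlt hn
  have hθ2pi : θ < 2 * Real.pi := lt_of_lt_of_le hθltB (by rw [hBn]; exact hsum)
  have hMfn : (fun i : Fin n => rotMat (α i) * shearMat (s i))
      = (fun i : Fin n => rotMat (A i) * shearMat (S i)) := by
    funext i; rw [hAeq i, hSeq i]
  have hmv : M.mulVec ![1, 0] = ![(wSeq A S n).re, (wSeq A S n).im] := by
    rw [hM, hMfn]; exact mulVec_eq_w A S n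
  have hray : ¬ ∃ t : ℝ, 0 < t ∧ M.mulVec ![1, 0] = t • ![1, 0] := by
    rintro ⟨t, ht, hfix⟩
    rw [hmv] at hfix
    have hre : (wSeq A S n).re = t := by
      have := congrFun hfix 0
      simpa using this
    have him : (wSeq A S n).im = 0 := by
      have := congrFun hfix 1
      simpa using this
    have hzt : wSeq A S n = (t : ℂ) := by
      apply Complex.ext <;> simp [hre, him]
    have habs : ‖wSeq A S n‖ = t := by
      rw [hzt, Complex.norm_real, Real.norm_eq_abs, abs_of_pos ht]
    have hexp : Complex.exp (θ * Complex.I) = 1 := by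
      have h := hrep
      rw [habs, hzt] at h
      have ht' : (t : ℂ) ≠ 0 := by exact_mod_cast ht.ne'
      have h' : (t : ℂ) * 1 = (t : ℂ) * Complex.exp (θ * Complex.I) := by
        rw [mul_one]; exact h
      exact (mul_left_cancel₀ ht' h').symm
    have hcos : Real.cos θ = 1 := by
      have := congrArg Complex.re hexp
      simpa [Complex.exp_ofReal_mul_I_re] using this
    have := (Real.cos_eq_one_iff_of_lt_of_lt (by linarith) hθ2pi).mp hcos
    linarith
  refine ⟨hray, fun h1 => hray ⟨1, one_pos, ?_⟩⟩
  rw [h1, Matrix.one_mulVec, one_smul]
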